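/- Let H and Q be bounded operators on a complex Hilbert space, and for s ∈ ℝ set Q(s) = e^{iHs} Q e^{−iHs} and I(s) = i e^{iHs} (HQ − QH) e^{−iHs}. Then for every t ≥ 0, ∫₀ᵗ∫₀ᵗ∫₀ᵗ T(I(t₁)I(t₂)I(t₃)) dt₃ dt₂ dt₁ + 3 ∫₀ᵗ∫₀ᵗ T(I(t₁)·[Q(t₂),I(t₂)]) dt₂ dt₁ + ∫₀ᵗ [Q(s),[Q(s),I(s)]] ds = Q(t)³ − 3 Q(t)² Q + 3 Q(t) Q² − Q³, where T denotes time ordering (factors arranged with decreasing time arguments from left to right) and [A,B] = AB − BA. (This is the third-order coefficient of the identity equating the T-ordered exponential of the interaction Hamiltonian with the Matthews T*-ordered exponential of the current, with the contact terms made explicit.) -/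

import Mathlib

open MeasureTheory Filter

set_option linter.unusedSectionVars false

open intervalIntegral

/-- Heisenberg evolution of the charge: `Q(s) = e^{iHs} Q e^{−iHs}`. -/
noncomputable def heisQ {A : Type*} [NormedRing A] [NormedAlgebra ℂ A] [CompleteSpace A]
    (H Q : A) (s : ℝ) : A :=
  NormedSpace.exp ((Complex.I * (s : ℂ)) • H) * Q *
    NormedSpace.exp ((-(Complex.I * (s : ℂ))) • H)

/-- The current `I(s) = i e^{iHs}(HQ − QH)e^{−iHs}`, the time derivative of `Q(s)`. -/
noncomputable def heisI {A : Type*} [NormedRing A] [NormedAlgebra ℂ A] [CompleteSpace A]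
    (H Q : A) (s : ℝ) : A :=
  Complex.I • (NormedSpace.exp ((Complex.I * (s : ℂ)) • H) * (H * Q - Q * H) *
    NormedSpace.exp ((-(Complex.I * (s : ℂ))) • H))

/-- Time-ordered product of two operator-valued functions evaluated at `t₁, t₂`:
the factor with the larger time argument is placed to the left. -/
noncomputable def timeOrder2 {A : Type*} [Mul A] (f g : ℝ → A) (t₁ t₂ : ℝ) : A :=
  if t₂ ≤ t₁ then f t₁ * g t₂ else g t₂ * f t₁

/-- Time-ordered product of three factors `f t₁, f t₂, f t₃`: factors with larger time
arguments are placed further to the left. -/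
noncomputable def timeOrder3 {A : Type*} [Mul A] (f : ℝ → A) (t₁ t₂ t₃ : ℝ) : A :=
  if t₂ ≤ t₁ ∧ t₃ ≤ t₂ then f t₁ * f t₂ * f t₃
  else if t₃ ≤ t₁ ∧ t₂ ≤ t₃ then f t₁ * f t₃ * f t₂
  else if t₁ ≤ t₂ ∧ t₃ ≤ t₁ then f t₂ * f t₁ * f t₃
  else if t₃ ≤ t₂ ∧ t₁ ≤ t₃ then f t₂ * f t₃ * f t₁
  else if t₁ ≤ t₃ ∧ t₂ ≤ t₁ then f t₃ * f t₁ * f t₂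
  else f t₃ * f t₂ * f t₁

section Helpers
variable {A : Type*} [NormedRing A] [NormedAlgebra ℝ A] [CompleteSpace A]
variable {g : ℝ → A} {a b : ℝ}

lemma my_int_mul_left (hg : IntervalIntegrable g volume a b) (c : A) :
    ∫ x in a..b, c * g x = c * ∫ x in a..b, g x := by
  simpa using (ContinuousLinearMap.mul ℝ A c).intervalIntegral_comp_comm hg

lemma my_int_mul_right (hg : IntervalIntegrable g volume a b) (c : A) :
    ∫ x in a..b, g x * c = (∫ x in a..b, g x) * c := by
  simpa using ((ContinuousLinearMap.mul ℝ A).flip c).intervalIntegral_comp_comm hg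

lemma my_int_mul_both (hg : IntervalIntegrable g volume a b) (c d : A) :
    ∫ x in a..b, c * g x * d = c * (∫ x in a..b, g x) * d := by
  calc ∫ x in a..b, c * g x * d = ∫ x in a..b, c * (g x * d) := by simp only [mul_assoc]
    _ = c * ∫ x in a..b, g x * d := my_int_mul_left (hg.mul_const d) c
    _ = c * ((∫ x in a..b, g x) * d) := by rw [my_int_mul_right hg d]
    _ = c * (∫ x in a..b, g x) * d := by rw [mul_assoc]

lemma my_int_congr {f : ℝ → A} (h : ∀ x ∈ Set.uIoc a b, f x = g x) :
    ∫ x in a..b, f x = ∫ x in a..b, g x :=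
  integral_congr_ae (Filter.Eventually.of_forall h)

lemma my_ii_congr {f : ℝ → A} (h : ∀ x ∈ Set.uIoc a b, f x = g x)
    (hg : IntervalIntegrable g volume a b) : IntervalIntegrable f volume a b := by
  rw [intervalIntegrable_iff] at hg ⊢
  exact hg.congr_fun (fun x hx => (h x hx).symm) measurableSet_uIoc

lemma my_eval_sub (hg : Continuous g) (a b : ℝ) :
    ∫ x in a..b, g x = (∫ x in (0:ℝ)..b, g x) - (∫ x in (0:ℝ)..a, g x) :=
  (integral_interval_sub_left (hg.intervalIntegrable _ _) (hg.intervalIntegrable _ _)).symm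

lemma my_hasDeriv_primitive (hg : Continuous g) (u : ℝ) :
    HasDerivAt (fun x => ∫ s in (0:ℝ)..x, g s) (g u) u :=
  integral_hasDerivAt_right (hg.intervalIntegrable _ _)
    (hg.stronglyMeasurableAtFilter _ _) hg.continuousAt

end Helpers

section TO
variable {A : Type*} [Mul A] {f : ℝ → A} {t₁ t₂ t₃ : ℝ}

lemma T3_a (h21 : t₂ ≤ t₁) (h32 : t₃ ≤ t₂) : timeOrder3 f t₁ t₂ t₃ = f t₁ * f t₂ * f t₃ := by
  unfold timeOrder3; rw [if_pos ⟨h21, h32⟩]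

lemma T3_b (h23 : t₂ ≤ t₃) (h31 : t₃ ≤ t₁) : timeOrder3 f t₁ t₂ t₃ = f t₁ * f t₃ * f t₂ := by
  rcases eq_or_lt_of_le h23 with rfl | h
  · rw [T3_a h31 le_rfl]
  · unfold timeOrder3
    rw [if_neg (by rintro ⟨u1, u2⟩; linarith), if_pos ⟨h31, h23⟩]

lemma T3_c (h12 : t₁ ≤ t₂) (h31 : t₃ ≤ t₁) : timeOrder3 f t₁ t₂ t₃ = f t₂ * f t₁ * f t₃ := by
  rcases eq_or_lt_of_le h12 with rfl | h
  · rw [T3_a le_rfl h31]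
  · unfold timeOrder3
    rw [if_neg (by rintro ⟨u1, u2⟩; linarith),
      if_neg (by rintro ⟨u1, u2⟩; linarith),
      if_pos ⟨h12, h31⟩]

lemma T3_d (h13 : t₁ ≤ t₃) (h32 : t₃ ≤ t₂) : timeOrder3 f t₁ t₂ t₃ = f t₂ * f t₃ * f t₁ := by
  rcases eq_or_lt_of_le h13 with rfl | h
  · rw [T3_c h32 le_rfl]
  · unfold timeOrder3
    rw [if_neg (by rintro ⟨u1, u2⟩; linarith),
      if_neg (by rintro ⟨u1, u2⟩; linarith),
      if_neg (by rintro ⟨u1, u2⟩; linarith),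
      if_pos ⟨h32, h13⟩]

lemma T3_e (h21 : t₂ ≤ t₁) (h13 : t₁ ≤ t₃) : timeOrder3 f t₁ t₂ t₃ = f t₃ * f t₁ * f t₂ := by
  rcases eq_or_lt_of_le h13 with rfl | h
  · rw [T3_b h21 le_rfl]
  · unfold timeOrder3
    rw [if_neg (by rintro ⟨u1, u2⟩; linarith),
      if_neg (by rintro ⟨u1, u2⟩; linarith),
      if_neg (by rintro ⟨u1, u2⟩; linarith),
      if_neg (by rintro ⟨u1, u2⟩; linarith),
      if_pos ⟨h13, h21⟩]

lemma T3_f (h12 : t₁ ≤ t₂) (h23 : t₂ ≤ t₃) : timeOrder3 f t₁ t₂ t₃ = f t₃ * f t₂ * f t₁ := by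
  rcases eq_or_lt_of_le h23 with rfl | h3
  · rw [T3_d h12 le_rfl]
  · rcases eq_or_lt_of_le h12 with rfl | h1
    · rw [T3_e le_rfl h23]
    · unfold timeOrder3
      rw [if_neg (by rintro ⟨u1, u2⟩; linarith),
        if_neg (by rintro ⟨u1, u2⟩; linarith),
        if_neg (by rintro ⟨u1, u2⟩; linarith),
        if_neg (by rintro ⟨u1, u2⟩; linarith),
        if_neg (by rintro ⟨u1, u2⟩; linarith)]

lemma T2_le {g : ℝ → A} (h : t₂ ≤ t₁) : timeOrder2 f g t₁ t₂ = f t₁ * g t₂ := if_pos h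

lemma T2_gt {g : ℝ → A} (h : t₁ < t₂) : timeOrder2 f g t₁ t₂ = g t₂ * f t₁ := if_neg (not_le.2 h)

end TO

section Heis
open NormedSpace
variable {A : Type*} [NormedRing A] [NormedAlgebra ℂ A] [CompleteSpace A]

lemma smul_IH (H : A) (s : ℝ) : (Complex.I * (s : ℂ)) • H = s • (Complex.I • H) := by
  rw [← smul_assoc, Complex.real_smul, mul_comm]

lemma smul_IH' (H : A) (s : ℝ) : (-(Complex.I * (s : ℂ))) • H = s • (-(Complex.I • H)) := by
  rw [smul_neg, ← smul_IH, neg_smul]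

lemma heisQ_eq (H Q : A) (s : ℝ) :
    heisQ H Q s = exp (s • (Complex.I • H)) * Q * exp (s • (-(Complex.I • H))) := by
  rw [heisQ, smul_IH, smul_IH']

lemma heisI_eq (H Q : A) (s : ℝ) :
    heisI H Q s = Complex.I • (exp (s • (Complex.I • H)) * (H * Q - Q * H) *
      exp (s • (-(Complex.I • H)))) := by
  rw [heisI, smul_IH, smul_IH']

lemma hasDerivAt_heisQ (H Q : A) (s : ℝ) : HasDerivAt (heisQ H Q) (heisI H Q s) s := by
  set B := Complex.I • H with hB
  have hE : HasDerivAt (fun u : ℝ => exp (u • B)) (exp (s • B) * B) s :=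
    hasDerivAt_exp_smul_const B s
  have hF : HasDerivAt (fun u : ℝ => exp (u • (-B))) (exp (s • (-B)) * (-B)) s :=
    hasDerivAt_exp_smul_const (-B) s
  have h := (hE.mul_const Q).fun_mul hF
  have hfun : (fun u : ℝ => exp (u • B) * Q * exp (u • (-B))) = heisQ H Q := by
    funext u; rw [heisQ_eq]
  rw [hfun] at h
  convert h using 1
  set E := exp (s • B)
  set F := exp (s • (-B))
  have hcomm : F * H = H * F := by
    have : Commute H (s • (-B)) := by
      rw [hB]
      exact (((Commute.refl H).smul_right Complex.I).neg_right).smul_right s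
    exact ((this.exp_right)).symm.eq
  rw [heisI_eq]
  show Complex.I • (E * (H * Q - Q * H) * F) = E * B * Q * F + E * Q * (F * -B)
  rw [hB, mul_neg, mul_smul_comm Complex.I F H, hcomm, mul_smul_comm Complex.I E H,
    smul_mul_assoc, smul_mul_assoc, ← smul_neg, mul_smul_comm Complex.I (E * Q), ← smul_add]
  congr 1
  noncomm_ring

lemma continuous_heisI (H Q : A) : Continuous (heisI H Q) := by
  have hc : ∀ C : A, Continuous fun s : ℝ => exp (s • C) := fun C =>
    continuous_iff_continuousAt.2 fun s => (hasDerivAt_exp_smul_const (𝕂 := ℝ) C s).continuousAt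
  have h2 : Continuous fun s : ℝ => Complex.I • (exp (s • (Complex.I • H)) * (H * Q - Q * H) *
      exp (s • (-(Complex.I • H)))) :=
    (((hc _).mul continuous_const).mul (hc _)).const_smul _
  have he : heisI H Q = _ := funext (heisI_eq H Q)
  rw [he]; exact h2

lemma continuous_heisQ (H Q : A) : Continuous (heisQ H Q) :=
  continuous_iff_continuousAt.2 fun s => (hasDerivAt_heisQ H Q s).continuousAt

lemma heisQ_zero (H Q : A) : heisQ H Q 0 = Q := by
  simp [heisQ]

lemma integral_heisI (H Q : A) (a b : ℝ) :
    ∫ s in a..b, heisI H Q s = heisQ H Q b - heisQ H Q a :=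
  integral_eq_sub_of_hasDerivAt (fun s _ => hasDerivAt_heisQ H Q s)
    ((continuous_heisI H Q).intervalIntegrable a b)

/-- `wf H Q u = ∫₀ᵘ I(s) Q(s) ds`. -/
noncomputable def wf (H Q : A) (u : ℝ) : A := ∫ s in (0:ℝ)..u, heisI H Q s * heisQ H Q s

/-- `vf H Q u = ∫₀ᵘ Q(s) I(s) ds`. -/
noncomputable def vf (H Q : A) (u : ℝ) : A := ∫ s in (0:ℝ)..u, heisQ H Q s * heisI H Q s

lemma hasDerivAt_wf (H Q : A) (u : ℝ) :
    HasDerivAt (wf H Q) (heisI H Q u * heisQ H Q u) u :=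
  my_hasDeriv_primitive ((continuous_heisI H Q).mul (continuous_heisQ H Q)) u

lemma hasDerivAt_vf (H Q : A) (u : ℝ) :
    HasDerivAt (vf H Q) (heisQ H Q u * heisI H Q u) u :=
  my_hasDeriv_primitive ((continuous_heisQ H Q).mul (continuous_heisI H Q)) u

lemma continuous_wf (H Q : A) : Continuous (wf H Q) :=
  continuous_iff_continuousAt.2 fun s => (hasDerivAt_wf H Q s).continuousAt

lemma continuous_vf (H Q : A) : Continuous (vf H Q) :=
  continuous_iff_continuousAt.2 fun s => (hasDerivAt_vf H Q s).continuousAt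

lemma wf_zero (H Q : A) : wf H Q 0 = 0 := integral_same

lemma vf_zero (H Q : A) : vf H Q 0 = 0 := integral_same

end Heis

section Inner
variable {A : Type*} [NormedRing A] [NormedAlgebra ℂ A] [CompleteSpace A]

lemma inner3_le (H Q : A) {t t₁ t₂ : ℝ} (h0 : 0 ≤ t₂) (h21 : t₂ ≤ t₁) (h1t : t₁ ≤ t) :
    ∫ t₃ in (0:ℝ)..t, timeOrder3 (heisI H Q) t₁ t₂ t₃
      = heisI H Q t₁ * (heisI H Q t₂ * heisQ H Q t₂) - heisI H Q t₁ * heisI H Q t₂ * Q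
        + (heisI H Q t₁ * heisQ H Q t₁ * heisI H Q t₂
            - heisI H Q t₁ * (heisQ H Q t₂ * heisI H Q t₂))
        + (heisQ H Q t - heisQ H Q t₁) * heisI H Q t₁ * heisI H Q t₂ := by
  set i := heisI H Q with hidef
  set f := heisQ H Q with hfdef
  have hic : Continuous i := continuous_heisI H Q
  have e1 : ∀ x ∈ Set.uIoc 0 t₂, timeOrder3 i t₁ t₂ x = i t₁ * i t₂ * i x := by
    intro x hx; rw [Set.uIoc_of_le h0] at hx; exact T3_a h21 hx.2
  have e2 : ∀ x ∈ Set.uIoc t₂ t₁, timeOrder3 i t₁ t₂ x = i t₁ * i x * i t₂ := by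
    intro x hx; rw [Set.uIoc_of_le h21] at hx; exact T3_b hx.1.le hx.2
  have e3 : ∀ x ∈ Set.uIoc t₁ t, timeOrder3 i t₁ t₂ x = i x * (i t₁ * i t₂) := by
    intro x hx; rw [Set.uIoc_of_le h1t] at hx; rw [T3_e h21 hx.1.le, mul_assoc]
  have i1 : IntervalIntegrable (timeOrder3 i t₁ t₂) volume 0 t₂ :=
    my_ii_congr e1 ((continuous_const.mul hic).intervalIntegrable _ _)
  have i2 : IntervalIntegrable (timeOrder3 i t₁ t₂) volume t₂ t₁ :=
    my_ii_congr e2 (((continuous_const.mul hic).mul continuous_const).intervalIntegrable _ _)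
  have i3 : IntervalIntegrable (timeOrder3 i t₁ t₂) volume t₁ t :=
    my_ii_congr e3 ((hic.mul continuous_const).intervalIntegrable _ _)
  rw [← integral_add_adjacent_intervals (i1.trans i2) i3,
    ← integral_add_adjacent_intervals i1 i2,
    my_int_congr e1, my_int_congr e2, my_int_congr e3,
    my_int_mul_left (hic.intervalIntegrable _ _) (i t₁ * i t₂),
    my_int_mul_both (hic.intervalIntegrable _ _) (i t₁) (i t₂),
    my_int_mul_right (hic.intervalIntegrable _ _) (i t₁ * i t₂)]
  simp only [hidef, hfdef]
  rw [integral_heisI, integral_heisI, integral_heisI, heisQ_zero]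
  noncomm_ring

lemma inner3_ge (H Q : A) {t t₁ t₂ : ℝ} (h0 : 0 ≤ t₁) (h12 : t₁ ≤ t₂) (h2t : t₂ ≤ t) :
    ∫ t₃ in (0:ℝ)..t, timeOrder3 (heisI H Q) t₁ t₂ t₃
      = heisI H Q t₂ * (heisI H Q t₁ * (heisQ H Q t₁ - Q))
        + (heisI H Q t₂ * heisQ H Q t₂ * heisI H Q t₁
            - heisI H Q t₂ * (heisQ H Q t₁ * heisI H Q t₁))
        + (heisQ H Q t * heisI H Q t₂ * heisI H Q t₁
            - heisQ H Q t₂ * heisI H Q t₂ * heisI H Q t₁) := by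
  set i := heisI H Q with hidef
  set f := heisQ H Q with hfdef
  have hic : Continuous i := continuous_heisI H Q
  have e1 : ∀ x ∈ Set.uIoc 0 t₁, timeOrder3 i t₁ t₂ x = i t₂ * i t₁ * i x := by
    intro x hx; rw [Set.uIoc_of_le h0] at hx; exact T3_c h12 hx.2
  have e2 : ∀ x ∈ Set.uIoc t₁ t₂, timeOrder3 i t₁ t₂ x = i t₂ * i x * i t₁ := by
    intro x hx; rw [Set.uIoc_of_le h12] at hx; exact T3_d hx.1.le hx.2
  have e3 : ∀ x ∈ Set.uIoc t₂ t, timeOrder3 i t₁ t₂ x = i x * (i t₂ * i t₁) := by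
    intro x hx; rw [Set.uIoc_of_le h2t] at hx; rw [T3_f h12 hx.1.le, mul_assoc]
  have i1 : IntervalIntegrable (timeOrder3 i t₁ t₂) volume 0 t₁ :=
    my_ii_congr e1 ((continuous_const.mul hic).intervalIntegrable _ _)
  have i2 : IntervalIntegrable (timeOrder3 i t₁ t₂) volume t₁ t₂ :=
    my_ii_congr e2 (((continuous_const.mul hic).mul continuous_const).intervalIntegrable _ _)
  have i3 : IntervalIntegrable (timeOrder3 i t₁ t₂) volume t₂ t :=
    my_ii_congr e3 ((hic.mul continuous_const).intervalIntegrable _ _)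
  rw [← integral_add_adjacent_intervals (i1.trans i2) i3,
    ← integral_add_adjacent_intervals i1 i2,
    my_int_congr e1, my_int_congr e2, my_int_congr e3,
    my_int_mul_left (hic.intervalIntegrable _ _) (i t₂ * i t₁),
    my_int_mul_both (hic.intervalIntegrable _ _) (i t₂) (i t₁),
    my_int_mul_right (hic.intervalIntegrable _ _) (i t₂ * i t₁)]
  simp only [hidef, hfdef]
  rw [integral_heisI, integral_heisI, integral_heisI, heisQ_zero]
  noncomm_ring

end Inner

section Outer
variable {A : Type*} [NormedRing A] [NormedAlgebra ℂ A] [CompleteSpace A]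

lemma wf_def (H Q : A) (u : ℝ) : wf H Q u = ∫ s in (0:ℝ)..u, heisI H Q s * heisQ H Q s := rfl

lemma vf_def (H Q : A) (u : ℝ) : vf H Q u = ∫ s in (0:ℝ)..u, heisQ H Q s * heisI H Q s := rfl

lemma outer3_eq (H Q : A) {t t₁ : ℝ} (h0 : 0 ≤ t₁) (h1t : t₁ ≤ t) :
    ∫ t₂ in (0:ℝ)..t, ∫ t₃ in (0:ℝ)..t, timeOrder3 (heisI H Q) t₁ t₂ t₃
      = (heisI H Q t₁ * wf H Q t₁ - heisI H Q t₁ * (heisQ H Q t₁ - Q) * Q + (heisI H Q t₁ * heisQ H Q t₁ * (heisQ H Q t₁ - Q) - heisI H Q t₁ * vf H Q t₁) + (heisQ H Q t - heisQ H Q t₁) * heisI H Q t₁ * (heisQ H Q t₁ - Q))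
        + ((heisQ H Q t - heisQ H Q t₁) * (heisI H Q t₁ * (heisQ H Q t₁ - Q)) + ((wf H Q t - wf H Q t₁) * heisI H Q t₁ - (heisQ H Q t - heisQ H Q t₁) * (heisQ H Q t₁ * heisI H Q t₁)) + (heisQ H Q t * (heisQ H Q t - heisQ H Q t₁) * heisI H Q t₁ - (vf H Q t - vf H Q t₁) * heisI H Q t₁)) := by
  have hic : Continuous (heisI H Q) := continuous_heisI H Q
  have hfc : Continuous (heisQ H Q) := continuous_heisQ H Q
  have e_le : ∀ x ∈ Set.uIoc 0 t₁, (∫ t₃ in (0:ℝ)..t, timeOrder3 (heisI H Q) t₁ x t₃)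
      = heisI H Q t₁ * (heisI H Q x * heisQ H Q x) - heisI H Q t₁ * heisI H Q x * Q + (heisI H Q t₁ * heisQ H Q t₁ * heisI H Q x - heisI H Q t₁ * (heisQ H Q x * heisI H Q x)) + (heisQ H Q t - heisQ H Q t₁) * heisI H Q t₁ * heisI H Q x := by
    intro x hx; rw [Set.uIoc_of_le h0] at hx
    exact inner3_le H Q hx.1.le hx.2 h1t
  have e_ge : ∀ x ∈ Set.uIoc t₁ t, (∫ t₃ in (0:ℝ)..t, timeOrder3 (heisI H Q) t₁ x t₃)
      = heisI H Q x * (heisI H Q t₁ * (heisQ H Q t₁ - Q)) + (heisI H Q x * heisQ H Q x * heisI H Q t₁ - heisI H Q x * (heisQ H Q t₁ * heisI H Q t₁)) + (heisQ H Q t * heisI H Q x * heisI H Q t₁ - heisQ H Q x * heisI H Q x * heisI H Q t₁) := by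
    intro x hx; rw [Set.uIoc_of_le h1t] at hx
    exact inner3_ge H Q h0 hx.1.le hx.2
  have cGle : Continuous (fun x => heisI H Q t₁ * (heisI H Q x * heisQ H Q x) - heisI H Q t₁ * heisI H Q x * Q + (heisI H Q t₁ * heisQ H Q t₁ * heisI H Q x - heisI H Q t₁ * (heisQ H Q x * heisI H Q x)) + (heisQ H Q t - heisQ H Q t₁) * heisI H Q t₁ * heisI H Q x) :=
    (((continuous_const.mul (hic.mul hfc)).sub
        ((continuous_const.mul hic).mul continuous_const)).add
      ((continuous_const.mul hic).sub (continuous_const.mul (hfc.mul hic)))).add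
      (continuous_const.mul hic)
  have cGge : Continuous (fun x => heisI H Q x * (heisI H Q t₁ * (heisQ H Q t₁ - Q)) + (heisI H Q x * heisQ H Q x * heisI H Q t₁ - heisI H Q x * (heisQ H Q t₁ * heisI H Q t₁)) + (heisQ H Q t * heisI H Q x * heisI H Q t₁ - heisQ H Q x * heisI H Q x * heisI H Q t₁)) :=
    ((hic.mul continuous_const).add
        (((hic.mul hfc).mul continuous_const).sub (hic.mul continuous_const))).add
      (((continuous_const.mul hic).mul continuous_const).sub
        ((hfc.mul hic).mul continuous_const))
  have ii_le : IntervalIntegrable (fun t₂ => ∫ t₃ in (0:ℝ)..t, timeOrder3 (heisI H Q) t₁ t₂ t₃)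
      volume 0 t₁ := my_ii_congr e_le (cGle.intervalIntegrable _ _)
  have ii_ge : IntervalIntegrable (fun t₂ => ∫ t₃ in (0:ℝ)..t, timeOrder3 (heisI H Q) t₁ t₂ t₃)
      volume t₁ t := my_ii_congr e_ge (cGge.intervalIntegrable _ _)
  rw [← integral_add_adjacent_intervals ii_le ii_ge, my_int_congr e_le, my_int_congr e_ge]
  rw [integral_add ((((continuous_const.fun_mul (hic.fun_mul hfc)).fun_sub
        ((continuous_const.fun_mul hic).fun_mul continuous_const)).fun_add
      ((continuous_const.fun_mul hic).fun_sub (continuous_const.fun_mul (hfc.fun_mul hic)))).intervalIntegrable _ _)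
      ((continuous_const.fun_mul hic).intervalIntegrable _ _),
    integral_add (((continuous_const.fun_mul (hic.fun_mul hfc)).fun_sub
        ((continuous_const.fun_mul hic).fun_mul continuous_const)).intervalIntegrable _ _)
      (((continuous_const.fun_mul hic).fun_sub (continuous_const.fun_mul (hfc.fun_mul hic))).intervalIntegrable _ _),
    integral_sub ((continuous_const.fun_mul (hic.fun_mul hfc)).intervalIntegrable _ _)
      (((continuous_const.fun_mul hic).fun_mul continuous_const).intervalIntegrable _ _),
    integral_sub ((continuous_const.fun_mul hic).intervalIntegrable _ _)
      ((continuous_const.fun_mul (hfc.fun_mul hic)).intervalIntegrable _ _)]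
  rw [integral_add (((hic.fun_mul continuous_const).fun_add
        (((hic.fun_mul hfc).fun_mul continuous_const).fun_sub (hic.fun_mul continuous_const))).intervalIntegrable _ _)
      ((((continuous_const.fun_mul hic).fun_mul continuous_const).fun_sub
        ((hfc.fun_mul hic).fun_mul continuous_const)).intervalIntegrable _ _),
    integral_add ((hic.fun_mul continuous_const).intervalIntegrable _ _)
      ((((hic.fun_mul hfc).fun_mul continuous_const).fun_sub (hic.fun_mul continuous_const)).intervalIntegrable _ _),
    integral_sub (((hic.fun_mul hfc).fun_mul continuous_const).intervalIntegrable _ _)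
      ((hic.fun_mul continuous_const).intervalIntegrable _ _),
    integral_sub (((continuous_const.fun_mul hic).fun_mul continuous_const).intervalIntegrable _ _)
      (((hfc.fun_mul hic).fun_mul continuous_const).intervalIntegrable _ _)]
  rw [my_int_mul_left ((hic.fun_mul hfc).intervalIntegrable _ _) (heisI H Q t₁),
    my_int_mul_both (hic.intervalIntegrable _ _) (heisI H Q t₁) Q,
    my_int_mul_left (hic.intervalIntegrable _ _) (heisI H Q t₁ * heisQ H Q t₁),
    my_int_mul_left ((hfc.fun_mul hic).intervalIntegrable _ _) (heisI H Q t₁),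
    my_int_mul_left (hic.intervalIntegrable _ _) ((heisQ H Q t - heisQ H Q t₁) * heisI H Q t₁),
    my_int_mul_right (hic.intervalIntegrable _ _) (heisI H Q t₁ * (heisQ H Q t₁ - Q)),
    my_int_mul_right ((hic.fun_mul hfc).intervalIntegrable _ _) (heisI H Q t₁),
    my_int_mul_right (hic.intervalIntegrable _ _) (heisQ H Q t₁ * heisI H Q t₁),
    my_int_mul_both (hic.intervalIntegrable _ _) (heisQ H Q t) (heisI H Q t₁),
    my_int_mul_right ((hfc.fun_mul hic).intervalIntegrable _ _) (heisI H Q t₁)]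
  rw [my_eval_sub (hic.fun_mul hfc) t₁ t, my_eval_sub (hfc.fun_mul hic) t₁ t]
  rw [integral_heisI, integral_heisI, heisQ_zero]
  simp only [← wf_def, ← vf_def]

lemma outer2_eq (H Q : A) {t t₁ : ℝ} (h0 : 0 ≤ t₁) (h1t : t₁ ≤ t) :
    ∫ t₂ in (0:ℝ)..t, timeOrder2 (heisI H Q)
        (fun s => heisQ H Q s * heisI H Q s - heisI H Q s * heisQ H Q s) t₁ t₂
      = heisI H Q t₁ * (vf H Q t₁ - wf H Q t₁) + ((vf H Q t - wf H Q t) - (vf H Q t₁ - wf H Q t₁)) * heisI H Q t₁ := by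
  have hic : Continuous (heisI H Q) := continuous_heisI H Q
  have hfc : Continuous (heisQ H Q) := continuous_heisQ H Q
  have hcc : Continuous (fun s => heisQ H Q s * heisI H Q s - heisI H Q s * heisQ H Q s) :=
    (hfc.mul hic).sub (hic.mul hfc)
  have e_le : ∀ x ∈ Set.uIoc 0 t₁, timeOrder2 (heisI H Q)
      (fun s => heisQ H Q s * heisI H Q s - heisI H Q s * heisQ H Q s) t₁ x
      = heisI H Q t₁ * (heisQ H Q x * heisI H Q x - heisI H Q x * heisQ H Q x) := by
    intro x hx; rw [Set.uIoc_of_le h0] at hx; exact T2_le hx.2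
  have e_ge : ∀ x ∈ Set.uIoc t₁ t, timeOrder2 (heisI H Q)
      (fun s => heisQ H Q s * heisI H Q s - heisI H Q s * heisQ H Q s) t₁ x
      = (heisQ H Q x * heisI H Q x - heisI H Q x * heisQ H Q x) * heisI H Q t₁ := by
    intro x hx; rw [Set.uIoc_of_le h1t] at hx; exact T2_gt hx.1
  have ii_le : IntervalIntegrable (timeOrder2 (heisI H Q)
      (fun s => heisQ H Q s * heisI H Q s - heisI H Q s * heisQ H Q s) t₁) volume 0 t₁ :=
    my_ii_congr e_le ((continuous_const.mul hcc).intervalIntegrable _ _)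
  have ii_ge : IntervalIntegrable (timeOrder2 (heisI H Q)
      (fun s => heisQ H Q s * heisI H Q s - heisI H Q s * heisQ H Q s) t₁) volume t₁ t :=
    my_ii_congr e_ge ((hcc.mul continuous_const).intervalIntegrable _ _)
  rw [← integral_add_adjacent_intervals ii_le ii_ge, my_int_congr e_le, my_int_congr e_ge]
  rw [my_int_mul_left (hcc.intervalIntegrable _ _) (heisI H Q t₁),
    my_int_mul_right (hcc.intervalIntegrable _ _) (heisI H Q t₁),
    my_eval_sub hcc t₁ t,
    integral_sub ((hfc.fun_mul hic).intervalIntegrable _ _) ((hic.fun_mul hfc).intervalIntegrable _ _),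
    integral_sub ((hfc.fun_mul hic).intervalIntegrable _ _) ((hic.fun_mul hfc).intervalIntegrable _ _)]
  simp only [← wf_def, ← vf_def]

end Outer

/-- Third-order coefficient of the identity equating the `T`-ordered exponential of the
interaction Hamiltonian with the Matthews `T*`-ordered exponential of the current:
`∫₀ᵗ∫₀ᵗ∫₀ᵗ T(I₁I₂I₃) + 3∫₀ᵗ∫₀ᵗ T(I₁[Q₂,I₂]) + ∫₀ᵗ [Q,[Q,I]](s) ds
  = Q(t)³ − 3Q(t)²Q + 3Q(t)Q² − Q³`. -/
theorem matthews_third_order {A : Type*} [NormedRing A] [NormedAlgebra ℂ A]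
    [CompleteSpace A] (H Q : A) (t : ℝ) (ht : 0 ≤ t) :
    (∫ t₁ in (0:ℝ)..t, ∫ t₂ in (0:ℝ)..t, ∫ t₃ in (0:ℝ)..t,
        timeOrder3 (heisI H Q) t₁ t₂ t₃)
      + 3 * (∫ t₁ in (0:ℝ)..t, ∫ t₂ in (0:ℝ)..t,
          timeOrder2 (heisI H Q)
            (fun s => heisQ H Q s * heisI H Q s - heisI H Q s * heisQ H Q s) t₁ t₂)
      + (∫ s in (0:ℝ)..t,
          (heisQ H Q s * (heisQ H Q s * heisI H Q s - heisI H Q s * heisQ H Q s)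
            - (heisQ H Q s * heisI H Q s - heisI H Q s * heisQ H Q s) * heisQ H Q s))
      = heisQ H Q t * heisQ H Q t * heisQ H Q t
        - 3 * (heisQ H Q t * heisQ H Q t * Q)
        + 3 * (heisQ H Q t * (Q * Q))
        - Q * Q * Q := by

  have hic : Continuous (heisI H Q) := continuous_heisI H Q
  have hfc : Continuous (heisQ H Q) := continuous_heisQ H Q
  have hwc : Continuous (wf H Q) := continuous_wf H Q
  have hvc : Continuous (vf H Q) := continuous_vf H Q
  have key3 : (∫ t₁ in (0:ℝ)..t, ∫ t₂ in (0:ℝ)..t, ∫ t₃ in (0:ℝ)..t,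
        timeOrder3 (heisI H Q) t₁ t₂ t₃)
      = ∫ s in (0:ℝ)..t, ((heisI H Q s * wf H Q s - heisI H Q s * (heisQ H Q s - Q) * Q + (heisI H Q s * heisQ H Q s * (heisQ H Q s - Q) - heisI H Q s * vf H Q s) + (heisQ H Q t - heisQ H Q s) * heisI H Q s * (heisQ H Q s - Q))
        + ((heisQ H Q t - heisQ H Q s) * (heisI H Q s * (heisQ H Q s - Q)) + ((wf H Q t - wf H Q s) * heisI H Q s - (heisQ H Q t - heisQ H Q s) * (heisQ H Q s * heisI H Q s)) + (heisQ H Q t * (heisQ H Q t - heisQ H Q s) * heisI H Q s - (vf H Q t - vf H Q s) * heisI H Q s))) := by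
    refine my_int_congr fun x hx => ?_
    rw [Set.uIoc_of_le ht] at hx
    exact outer3_eq H Q hx.1.le hx.2
  have key2 : (∫ t₁ in (0:ℝ)..t, ∫ t₂ in (0:ℝ)..t,
        timeOrder2 (heisI H Q)
          (fun s => heisQ H Q s * heisI H Q s - heisI H Q s * heisQ H Q s) t₁ t₂)
      = ∫ s in (0:ℝ)..t, (heisI H Q s * (vf H Q s - wf H Q s) + (vf H Q t - wf H Q t - (vf H Q s - wf H Q s)) * heisI H Q s) := by
    refine my_int_congr fun x hx => ?_
    rw [Set.uIoc_of_le ht] at hx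
    exact outer2_eq H Q hx.1.le hx.2
  have cP1 : Continuous (fun s => (heisI H Q s * wf H Q s - heisI H Q s * (heisQ H Q s - Q) * Q + (heisI H Q s * heisQ H Q s * (heisQ H Q s - Q) - heisI H Q s * vf H Q s) + (heisQ H Q t - heisQ H Q s) * heisI H Q s * (heisQ H Q s - Q))
        + ((heisQ H Q t - heisQ H Q s) * (heisI H Q s * (heisQ H Q s - Q)) + ((wf H Q t - wf H Q s) * heisI H Q s - (heisQ H Q t - heisQ H Q s) * (heisQ H Q s * heisI H Q s)) + (heisQ H Q t * (heisQ H Q t - heisQ H Q s) * heisI H Q s - (vf H Q t - vf H Q s) * heisI H Q s))) :=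
    ((((hic.mul hwc).sub ((hic.mul (hfc.sub continuous_const)).mul continuous_const)).add
        (((hic.mul hfc).mul (hfc.sub continuous_const)).sub (hic.mul hvc))).add
      (((continuous_const.sub hfc).mul hic).mul (hfc.sub continuous_const))).add
      ((((continuous_const.sub hfc).mul (hic.mul (hfc.sub continuous_const))).add
          (((continuous_const.sub hwc).mul hic).sub
            ((continuous_const.sub hfc).mul (hfc.mul hic)))).add
        (((continuous_const.mul (continuous_const.sub hfc)).mul hic).sub
          ((continuous_const.sub hvc).mul hic)))
  have cP2 : Continuous (fun s => heisI H Q s * (vf H Q s - wf H Q s) + (vf H Q t - wf H Q t - (vf H Q s - wf H Q s)) * heisI H Q s) :=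
    (hic.mul (hvc.sub hwc)).add ((continuous_const.sub (hvc.sub hwc)).mul hic)
  have cP3 : Continuous (fun s => heisQ H Q s * (heisQ H Q s * heisI H Q s - heisI H Q s * heisQ H Q s) - (heisQ H Q s * heisI H Q s - heisI H Q s * heisQ H Q s) * heisQ H Q s) :=
    (hfc.mul ((hfc.mul hic).sub (hic.mul hfc))).sub (((hfc.mul hic).sub (hic.mul hfc)).mul hfc)
  rw [key3, key2, ← my_int_mul_left (cP2.intervalIntegrable 0 t) (3:A),
    ← integral_add (cP1.intervalIntegrable 0 t)
      ((continuous_const.fun_mul cP2).intervalIntegrable 0 t),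
    ← integral_add ((cP1.fun_add (continuous_const.fun_mul cP2)).intervalIntegrable 0 t)
      (cP3.intervalIntegrable 0 t)]
  have hD : ∀ s : ℝ, HasDerivAt (fun s => 2 * (vf H Q s * Q) - 2 * (vf H Q s * heisQ H Q s) + 2 * (vf H Q t * heisQ H Q s) - 2 * (wf H Q s * Q) + 2 * (wf H Q s * heisQ H Q s) - 2 * (wf H Q t * heisQ H Q s) + heisQ H Q s * Q * Q + 2 * (heisQ H Q s * vf H Q s) - 2 * (heisQ H Q s * wf H Q s) - 2 * (heisQ H Q t * vf H Q s) + 2 * (heisQ H Q t * wf H Q s) - 2 * (heisQ H Q t * heisQ H Q s * Q) + heisQ H Q t * heisQ H Q t * heisQ H Q s)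
      (((heisI H Q s * wf H Q s - heisI H Q s * (heisQ H Q s - Q) * Q + (heisI H Q s * heisQ H Q s * (heisQ H Q s - Q) - heisI H Q s * vf H Q s) + (heisQ H Q t - heisQ H Q s) * heisI H Q s * (heisQ H Q s - Q))
        + ((heisQ H Q t - heisQ H Q s) * (heisI H Q s * (heisQ H Q s - Q)) + ((wf H Q t - wf H Q s) * heisI H Q s - (heisQ H Q t - heisQ H Q s) * (heisQ H Q s * heisI H Q s)) + (heisQ H Q t * (heisQ H Q t - heisQ H Q s) * heisI H Q s - (vf H Q t - vf H Q s) * heisI H Q s))) + 3 * (heisI H Q s * (vf H Q s - wf H Q s) + (vf H Q t - wf H Q t - (vf H Q s - wf H Q s)) * heisI H Q s) + (heisQ H Q s * (heisQ H Q s * heisI H Q s - heisI H Q s * heisQ H Q s) - (heisQ H Q s * heisI H Q s - heisI H Q s * heisQ H Q s) * heisQ H Q s)) s := by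
    intro s
    have h1 := hasDerivAt_heisQ H Q s
    have h2 := hasDerivAt_wf H Q s
    have h3 := hasDerivAt_vf H Q s
    have big := (((((((((((((HasDerivAt.const_mul (2:A) (h3.mul_const Q)).sub
      (HasDerivAt.const_mul (2:A) (h3.mul h1))).add
      (HasDerivAt.const_mul (2:A) (HasDerivAt.const_mul (vf H Q t) h1))).sub
      (HasDerivAt.const_mul (2:A) (h2.mul_const Q))).add
      (HasDerivAt.const_mul (2:A) (h2.mul h1))).sub
      (HasDerivAt.const_mul (2:A) (HasDerivAt.const_mul (wf H Q t) h1))).add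
      ((h1.mul_const Q).mul_const Q)).add
      (HasDerivAt.const_mul (2:A) (h1.mul h3))).sub
      (HasDerivAt.const_mul (2:A) (h1.mul h2))).sub
      (HasDerivAt.const_mul (2:A) (HasDerivAt.const_mul (heisQ H Q t) h3))).add
      (HasDerivAt.const_mul (2:A) (HasDerivAt.const_mul (heisQ H Q t) h2))).sub
      (HasDerivAt.const_mul (2:A) ((HasDerivAt.const_mul (heisQ H Q t) h1).mul_const Q))).add
      (HasDerivAt.const_mul (heisQ H Q t * heisQ H Q t) h1))
    have heq : (2 * (heisQ H Q s * heisI H Q s * Q)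
        - 2 * (heisQ H Q s * heisI H Q s * heisQ H Q s + vf H Q s * heisI H Q s)
        + 2 * (vf H Q t * heisI H Q s)
        - 2 * (heisI H Q s * heisQ H Q s * Q)
        + 2 * (heisI H Q s * heisQ H Q s * heisQ H Q s + wf H Q s * heisI H Q s)
        - 2 * (wf H Q t * heisI H Q s)
        + heisI H Q s * Q * Q
        + 2 * (heisI H Q s * vf H Q s + heisQ H Q s * (heisQ H Q s * heisI H Q s))
        - 2 * (heisI H Q s * wf H Q s + heisQ H Q s * (heisI H Q s * heisQ H Q s))
        - 2 * (heisQ H Q t * (heisQ H Q s * heisI H Q s))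
        + 2 * (heisQ H Q t * (heisI H Q s * heisQ H Q s))
        - 2 * (heisQ H Q t * heisI H Q s * Q)
        + heisQ H Q t * heisQ H Q t * heisI H Q s)
        = ((heisI H Q s * wf H Q s - heisI H Q s * (heisQ H Q s - Q) * Q + (heisI H Q s * heisQ H Q s * (heisQ H Q s - Q) - heisI H Q s * vf H Q s) + (heisQ H Q t - heisQ H Q s) * heisI H Q s * (heisQ H Q s - Q))
        + ((heisQ H Q t - heisQ H Q s) * (heisI H Q s * (heisQ H Q s - Q)) + ((wf H Q t - wf H Q s) * heisI H Q s - (heisQ H Q t - heisQ H Q s) * (heisQ H Q s * heisI H Q s)) + (heisQ H Q t * (heisQ H Q t - heisQ H Q s) * heisI H Q s - (vf H Q t - vf H Q s) * heisI H Q s))) + 3 * (heisI H Q s * (vf H Q s - wf H Q s) + (vf H Q t - wf H Q t - (vf H Q s - wf H Q s)) * heisI H Q s) + (heisQ H Q s * (heisQ H Q s * heisI H Q s - heisI H Q s * heisQ H Q s) - (heisQ H Q s * heisI H Q s - heisI H Q s * heisQ H Q s) * heisQ H Q s) := by noncomm_ring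
    exact heq ▸ big
  rw [integral_eq_sub_of_hasDerivAt (fun s _ => hD s)
    (((cP1.fun_add (continuous_const.fun_mul cP2)).fun_add cP3).intervalIntegrable 0 t)]
  simp only [heisQ_zero, wf_zero, vf_zero]
  noncomm_ring
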